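/- Let m, M, N be positive integers and let A_1, …, A_M be N×N real symmetric positive semidefinite matrices. Suppose that for each k there is an index set S_k ⊆ {1, …, N} with |S_k| ≤ m such that (A_k)_{ij} = 0 whenever i ∉ S_k or j ∉ S_k. Let A = Σ_{k=1}^M A_k. Then max_{1 ≤ j ≤ N} A_{jj} ≤ λ_max(A) ≤ m · max_{1 ≤ j ≤ N} A_{jj}. -/

import Mathlib

open Matrix

-- termwise AM-GM bound for PSD matrices
lemma psd_cross_bound {N : ℕ} {B : Matrix (Fin N) (Fin N) ℝ} (hB : B.PosSemidef)
    (x : Fin N → ℝ) (i j : Fin N) :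
    2 * (x i * B i j * x j) ≤ B i i * x i ^ 2 + B j j * x j ^ 2 := by
  rcases eq_or_ne i j with rfl | hij
  · ring_nf
    nlinarith [hB.dotProduct_mulVec_nonneg (Pi.single i (x i)), (by simp [dotProduct, mulVec, Pi.single_apply, Finset.sum_ite_eq] : star (Pi.single i (x i)) ⬝ᵥ (B *ᵥ Pi.single i (x i)) = x i * (B i i * x i))]
  · have h := hB.dotProduct_mulVec_nonneg (Pi.single i (x i) - Pi.single j (x j))
    have hsym : B j i = B i j := by
      have := congrFun (congrFun hB.1 i) j
      simpa using this
    have hcomp : star (Pi.single i (x i) - Pi.single j (x j)) ⬝ᵥ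
        (B *ᵥ (Pi.single i (x i) - Pi.single j (x j)))
        = x i * (B i i * x i - B i j * x j) - x j * (B j i * x i - B j j * x j) := by
      simp [dotProduct, mulVec, sub_dotProduct, Pi.single_apply, Finset.sum_ite_eq,
        Finset.sum_sub_distrib, mul_ite, ite_mul, sub_mul, mul_sub, hij, hij.symm]
      ring
    rw [hcomp, hsym] at h
    nlinarith

lemma psd_diag_nonneg {N : ℕ} {B : Matrix (Fin N) (Fin N) ℝ} (hB : B.PosSemidef) (j : Fin N) :
    0 ≤ B j j := by
  have := hB.dotProduct_mulVec_nonneg (Pi.single j 1)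
  simpa [dotProduct, mulVec, Pi.single_apply, Finset.sum_ite_eq] using this

lemma quad_bound {N m : ℕ} {B : Matrix (Fin N) (Fin N) ℝ} (hB : B.PosSemidef)
    (S : Finset (Fin N)) (hcard : S.card ≤ m)
    (hs : ∀ i j : Fin N, i ∉ S ∨ j ∉ S → B i j = 0) (x : Fin N → ℝ) :
    x ⬝ᵥ (B *ᵥ x) ≤ m * ∑ j, B j j * x j ^ 2 := by
  have hexp : x ⬝ᵥ (B *ᵥ x) = ∑ i ∈ S, ∑ j ∈ S, x i * B i j * x j := by
    have h1 : x ⬝ᵥ (B *ᵥ x) = ∑ i, ∑ j, x i * B i j * x j := by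
      simp [dotProduct, mulVec, Finset.mul_sum, mul_assoc]
    rw [h1]
    rw [← Finset.sum_subset S.subset_univ (fun i _ hi => Finset.sum_eq_zero fun j _ => by
      rw [hs i j (Or.inl hi)]; ring)]
    apply Finset.sum_congr rfl
    intro i _
    rw [← Finset.sum_subset S.subset_univ (fun j _ hj => by
      rw [hs i j (Or.inr hj)]; ring)]
  rw [hexp]
  have key : ∑ i ∈ S, ∑ j ∈ S, x i * B i j * x j
      ≤ ∑ i ∈ S, ∑ j ∈ S, (B i i * x i ^ 2 + B j j * x j ^ 2) / 2 := by
    apply Finset.sum_le_sum; intro i _; apply Finset.sum_le_sum; intro j _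
    have := psd_cross_bound hB x i j
    linarith
  have inner : ∀ i : Fin N, ∑ j ∈ S, (B i i * x i ^ 2 + B j j * x j ^ 2) / 2
      = ((S.card : ℝ) * (B i i * x i ^ 2) + ∑ j ∈ S, B j j * x j ^ 2) / 2 := by
    intro i
    rw [← Finset.sum_div, Finset.sum_add_distrib, Finset.sum_const, nsmul_eq_mul]
  have keq : ∑ i ∈ S, ∑ j ∈ S, (B i i * x i ^ 2 + B j j * x j ^ 2) / 2
      = (S.card : ℝ) * ∑ j ∈ S, B j j * x j ^ 2 := by
    simp_rw [inner]
    rw [← Finset.sum_div, Finset.sum_add_distrib, ← Finset.mul_sum, Finset.sum_const,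
      nsmul_eq_mul]
    ring
  have hnn : ∀ j ∈ Finset.univ, j ∉ S → 0 ≤ B j j * x j ^ 2 := fun j _ _ =>
    mul_nonneg (psd_diag_nonneg hB j) (sq_nonneg _)
  calc ∑ i ∈ S, ∑ j ∈ S, x i * B i j * x j
      ≤ (S.card : ℝ) * ∑ j ∈ S, B j j * x j ^ 2 := by rw [← keq]; exact key
    _ ≤ (m : ℝ) * ∑ j ∈ S, B j j * x j ^ 2 := by
        apply mul_le_mul_of_nonneg_right (by exact_mod_cast hcard)
        exact Finset.sum_nonneg fun j _ => mul_nonneg (psd_diag_nonneg hB j) (sq_nonneg _)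
    _ ≤ (m : ℝ) * ∑ j, B j j * x j ^ 2 := by
        apply mul_le_mul_of_nonneg_left _ (by positivity)
        exact Finset.sum_le_sum_of_subset_of_nonneg S.subset_univ hnn


/-- The largest eigenvalue of a sum of positive semidefinite matrices, each
supported on an index set of size at most `m`, is within the factor `m` of the
largest diagonal entry of the sum. -/
theorem largest_eigenvalue_local_support_bound
    {m M N : ℕ} (hm : 0 < m) (hM : 0 < M) (hN : 0 < N)
    (A : Fin M → Matrix (Fin N) (Fin N) ℝ)
    (hA : ∀ k, (A k).PosSemidef)
    (S : Fin M → Finset (Fin N)) (hScard : ∀ k, (S k).card ≤ m)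
    (hsupp : ∀ k, ∀ i j : Fin N, i ∉ S k ∨ j ∉ S k → A k i j = 0)
    (hsum : (∑ k, A k).IsHermitian) :
    (⨆ j, (∑ k, A k) j j) ≤ (⨆ i, hsum.eigenvalues i) ∧
      (⨆ i, hsum.eigenvalues i) ≤ m * ⨆ j, (∑ k, A k) j j := by
  haveI : Nonempty (Fin N) := ⟨⟨0, hN⟩⟩
  set B : Matrix (Fin N) (Fin N) ℝ := ∑ k, A k with hB
  have hBapp : ∀ i j, B i j = ∑ k, A k i j := by
    intro i j; simp [hB, Matrix.sum_apply]
  have hμ : ∀ j, B j j ≤ ⨆ j', B j' j' := fun j =>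
    le_ciSup (f := fun j' => B j' j') (Set.Finite.bddAbove (Set.finite_range _)) j
  have hlam : ∀ i, hsum.eigenvalues i ≤ ⨆ i', hsum.eigenvalues i' := fun i =>
    le_ciSup (Set.Finite.bddAbove (Set.finite_range _)) i
  -- the unitary
  set U : Matrix (Fin N) (Fin N) ℝ := (hsum.eigenvectorUnitary : Matrix (Fin N) (Fin N) ℝ) with hU
  have hUnorm : ∀ j, ∑ i, (U j i) ^ 2 = 1 := by
    intro j
    have h1 : U * star U = 1 := (Matrix.mem_unitaryGroup_iff).mp hsum.eigenvectorUnitary.2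
    have := congrFun (congrFun h1 j) j
    simpa [Matrix.mul_apply, Matrix.one_apply, conjTranspose_apply, sq] using this
  have hdiag : ∀ j, B j j = ∑ i, hsum.eigenvalues i * (U j i) ^ 2 := by
    intro j
    conv_lhs => rw [hsum.spectral_theorem]
    simp [Matrix.mul_apply, Matrix.diagonal_apply, conjTranspose_apply, Finset.sum_ite_eq,
      sq]
    exact Finset.sum_congr rfl fun p _ => by rw [hU]; simp; ring
  constructor
  · -- lower bound
    apply ciSup_le
    intro j
    calc B j j = ∑ i, hsum.eigenvalues i * (U j i) ^ 2 := hdiag j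
      _ ≤ ∑ i, (⨆ i', hsum.eigenvalues i') * (U j i) ^ 2 :=
          Finset.sum_le_sum fun i _ => mul_le_mul_of_nonneg_right (hlam i) (sq_nonneg _)
      _ = (⨆ i', hsum.eigenvalues i') * ∑ i, (U j i) ^ 2 := by rw [Finset.mul_sum]
      _ = ⨆ i', hsum.eigenvalues i' := by rw [hUnorm j, mul_one]
  · -- upper bound
    apply ciSup_le
    intro i
    set v : Fin N → ℝ := ⇑(hsum.eigenvectorBasis i) with hv
    have hval : hsum.eigenvalues i = v ⬝ᵥ (B *ᵥ v) := by
      have := hsum.eigenvalues_eq i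
      simpa using this
    have hnorm : ∑ j, v j ^ 2 = 1 := by
      have h1 : ‖hsum.eigenvectorBasis i‖ = 1 := hsum.eigenvectorBasis.orthonormal.1 i
      have h2 : ‖hsum.eigenvectorBasis i‖ ^ 2 = ∑ j, v j ^ 2 := by
        rw [EuclideanSpace.norm_eq]
        rw [Real.sq_sqrt (by positivity)]
        simp [hv, sq_abs]
      rw [h1] at h2; simpa using h2.symm
    have hquad : v ⬝ᵥ (B *ᵥ v) ≤ m * ∑ j, B j j * v j ^ 2 := by
      have h1 : ∀ i, (B *ᵥ v) i = ∑ k, (A k *ᵥ v) i := by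
        intro i
        simp only [hB, mulVec, dotProduct, Matrix.sum_apply, Finset.sum_mul]
        rw [Finset.sum_comm]
      have hsplit : v ⬝ᵥ (B *ᵥ v) = ∑ k, v ⬝ᵥ (A k *ᵥ v) := by
        simp only [dotProduct, h1, Finset.mul_sum]
        rw [Finset.sum_comm]
      rw [hsplit]
      calc ∑ k, v ⬝ᵥ (A k *ᵥ v) ≤ ∑ k, (m : ℝ) * ∑ j, A k j j * v j ^ 2 :=
            Finset.sum_le_sum fun k _ => quad_bound (hA k) (S k) (hScard k) (hsupp k) v
        _ = (m : ℝ) * ∑ j, B j j * v j ^ 2 := by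
            rw [← Finset.mul_sum, Finset.sum_comm]
            congr 1
            apply Finset.sum_congr rfl
            intro j _
            rw [hBapp j j, Finset.sum_mul]
    have hfinal : (m : ℝ) * ∑ j, B j j * v j ^ 2 ≤ m * ⨆ j, B j j := by
      apply mul_le_mul_of_nonneg_left _ (by positivity)
      calc ∑ j, B j j * v j ^ 2 ≤ ∑ j, (⨆ j', B j' j') * v j ^ 2 :=
            Finset.sum_le_sum fun j _ => mul_le_mul_of_nonneg_right (hμ j) (sq_nonneg _)
        _ = (⨆ j', B j' j') * ∑ j, v j ^ 2 := by rw [Finset.mul_sum]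
        _ = ⨆ j', B j' j' := by rw [hnorm, mul_one]
    rw [hval]
    exact le_trans hquad hfinal
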